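/- Type preservation theorem for Fpl: for all expressions e, e' and types T, if ∅ ⊢ e : T and e → e', then ∅ ⊢ e' : T. -/

import Mathlib

/-!
Formalization of the Fpl language (Cimini, Miller, Siek: "Well-Typed Languages
are Sound"): syntax, typing, values, errors, evaluation/error contexts and
small-step reduction.  Term and type variables use de Bruijn indices, so all
substitutions are capture-avoiding by construction.
-/

namespace Fpl

/-- Types of Fpl: `Bool | Int | T→T | List T | T+T | X | ∀X.T | μX.T`
(de Bruijn type variables). -/
inductive Ty : Type
  | bool : Ty
  | int : Ty
  | arrow : Ty → Ty → Ty
  | list : Ty → Ty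
  | sum : Ty → Ty → Ty
  | var : ℕ → Ty
  | all : Ty → Ty
  | mu : Ty → Ty
  deriving DecidableEq

/-- Shift the type variables `≥ c` up by one. -/
def Ty.shift (c : ℕ) : Ty → Ty
  | .bool => .bool
  | .int => .int
  | .arrow T1 T2 => .arrow (T1.shift c) (T2.shift c)
  | .list T => .list (T.shift c)
  | .sum T1 T2 => .sum (T1.shift c) (T2.shift c)
  | .var X => if X < c then .var X else .var (X + 1)
  | .all T => .all (T.shift (c + 1))
  | .mu T => .mu (T.shift (c + 1))

/-- Capture-avoiding substitution of the type `S` for type variable `j`. -/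
def Ty.subst : ℕ → Ty → Ty → Ty
  | _, _, .bool => .bool
  | _, _, .int => .int
  | j, S, .arrow T1 T2 => .arrow (Ty.subst j S T1) (Ty.subst j S T2)
  | j, S, .list T => .list (Ty.subst j S T)
  | j, S, .sum T1 T2 => .sum (Ty.subst j S T1) (Ty.subst j S T2)
  | j, S, .var X => if X = j then S else if j < X then .var (X - 1) else .var X
  | j, S, .all T => .all (Ty.subst (j + 1) (S.shift 0) T)
  | j, S, .mu T => .mu (Ty.subst (j + 1) (S.shift 0) T)
termination_by j S T => sizeOf T

/-- `T.open0 S` is `T[S/X]` where `X` is the outermost (de Bruijn 0) type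
variable of `T`; e.g. the body of a `μX.T` or `∀X.T` binder. -/
def Ty.open0 (T S : Ty) : Ty := Ty.subst 0 S T

/-- Expressions of Fpl (de Bruijn term variables):
`true | false | if e e e | z | succ e | pred e | isZero e | x | λx.e | e e |
 nil | cons e e | head e | tail e | isNil e | inl e | inr e |
 case e of inl x => e | inr x => e | ΛX.e | e[T] | fold e | unfold e |
 fix e | letrec x = e in e | raise e | try e with e`.
In `caseE e1 e2 e3` both branches bind one term variable; in `letrec e1 e2`
both `e1` and `e2` bind the recursive term variable. -/
inductive Exp : Type
  | tt : Exp
  | ff : Exp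
  | ite : Exp → Exp → Exp → Exp
  | z : Exp
  | succ : Exp → Exp
  | pred : Exp → Exp
  | isZero : Exp → Exp
  | var : ℕ → Exp
  | lam : Exp → Exp
  | app : Exp → Exp → Exp
  | nil : Exp
  | cons : Exp → Exp → Exp
  | head : Exp → Exp
  | tail : Exp → Exp
  | isNil : Exp → Exp
  | inl : Exp → Exp
  | inr : Exp → Exp
  | caseE : Exp → Exp → Exp → Exp
  | tlam : Exp → Exp
  | tapp : Exp → Ty → Exp
  | fold : Exp → Exp
  | unfold : Exp → Exp
  | fix : Exp → Exp
  | letrec : Exp → Exp → Exp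
  | raise : Exp → Exp
  | tryw : Exp → Exp → Exp

/-- Shift the type variables `≥ c` occurring in an expression up by one. -/
def Exp.shiftTy (c : ℕ) : Exp → Exp
  | .tt => .tt
  | .ff => .ff
  | .ite e1 e2 e3 => .ite (e1.shiftTy c) (e2.shiftTy c) (e3.shiftTy c)
  | .z => .z
  | .succ e => .succ (e.shiftTy c)
  | .pred e => .pred (e.shiftTy c)
  | .isZero e => .isZero (e.shiftTy c)
  | .var x => .var x
  | .lam e => .lam (e.shiftTy c)
  | .app e1 e2 => .app (e1.shiftTy c) (e2.shiftTy c)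
  | .nil => .nil
  | .cons e1 e2 => .cons (e1.shiftTy c) (e2.shiftTy c)
  | .head e => .head (e.shiftTy c)
  | .tail e => .tail (e.shiftTy c)
  | .isNil e => .isNil (e.shiftTy c)
  | .inl e => .inl (e.shiftTy c)
  | .inr e => .inr (e.shiftTy c)
  | .caseE e1 e2 e3 => .caseE (e1.shiftTy c) (e2.shiftTy c) (e3.shiftTy c)
  | .tlam e => .tlam (e.shiftTy (c + 1))
  | .tapp e T => .tapp (e.shiftTy c) (T.shift c)
  | .fold e => .fold (e.shiftTy c)
  | .unfold e => .unfold (e.shiftTy c)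
  | .fix e => .fix (e.shiftTy c)
  | .letrec e1 e2 => .letrec (e1.shiftTy c) (e2.shiftTy c)
  | .raise e => .raise (e.shiftTy c)
  | .tryw e1 e2 => .tryw (e1.shiftTy c) (e2.shiftTy c)

/-- Shift the term variables `≥ c` up by one. -/
def Exp.shiftTm (c : ℕ) : Exp → Exp
  | .tt => .tt
  | .ff => .ff
  | .ite e1 e2 e3 => .ite (e1.shiftTm c) (e2.shiftTm c) (e3.shiftTm c)
  | .z => .z
  | .succ e => .succ (e.shiftTm c)
  | .pred e => .pred (e.shiftTm c)
  | .isZero e => .isZero (e.shiftTm c)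
  | .var x => if x < c then .var x else .var (x + 1)
  | .lam e => .lam (e.shiftTm (c + 1))
  | .app e1 e2 => .app (e1.shiftTm c) (e2.shiftTm c)
  | .nil => .nil
  | .cons e1 e2 => .cons (e1.shiftTm c) (e2.shiftTm c)
  | .head e => .head (e.shiftTm c)
  | .tail e => .tail (e.shiftTm c)
  | .isNil e => .isNil (e.shiftTm c)
  | .inl e => .inl (e.shiftTm c)
  | .inr e => .inr (e.shiftTm c)
  | .caseE e1 e2 e3 => .caseE (e1.shiftTm c) (e2.shiftTm (c + 1)) (e3.shiftTm (c + 1))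
  | .tlam e => .tlam (e.shiftTm c)
  | .tapp e T => .tapp (e.shiftTm c) T
  | .fold e => .fold (e.shiftTm c)
  | .unfold e => .unfold (e.shiftTm c)
  | .fix e => .fix (e.shiftTm c)
  | .letrec e1 e2 => .letrec (e1.shiftTm (c + 1)) (e2.shiftTm (c + 1))
  | .raise e => .raise (e.shiftTm c)
  | .tryw e1 e2 => .tryw (e1.shiftTm c) (e2.shiftTm c)

/-- Capture-avoiding substitution of the expression `s` for term variable `j`. -/
def Exp.substTm : ℕ → Exp → Exp → Exp
  | j, s, .tt => .tt
  | j, s, .ff => .ff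
  | j, s, .ite e1 e2 e3 => .ite (Exp.substTm j s e1) (Exp.substTm j s e2) (Exp.substTm j s e3)
  | j, s, .z => .z
  | j, s, .succ e => .succ (Exp.substTm j s e)
  | j, s, .pred e => .pred (Exp.substTm j s e)
  | j, s, .isZero e => .isZero (Exp.substTm j s e)
  | j, s, .var x => if x = j then s else if j < x then .var (x - 1) else .var x
  | j, s, .lam e => .lam (Exp.substTm (j + 1) (s.shiftTm 0) e)
  | j, s, .app e1 e2 => .app (Exp.substTm j s e1) (Exp.substTm j s e2)
  | j, s, .nil => .nil
  | j, s, .cons e1 e2 => .cons (Exp.substTm j s e1) (Exp.substTm j s e2)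
  | j, s, .head e => .head (Exp.substTm j s e)
  | j, s, .tail e => .tail (Exp.substTm j s e)
  | j, s, .isNil e => .isNil (Exp.substTm j s e)
  | j, s, .inl e => .inl (Exp.substTm j s e)
  | j, s, .inr e => .inr (Exp.substTm j s e)
  | j, s, .caseE e1 e2 e3 =>
      .caseE (Exp.substTm j s e1) (Exp.substTm (j + 1) (s.shiftTm 0) e2)
        (Exp.substTm (j + 1) (s.shiftTm 0) e3)
  | j, s, .tlam e => .tlam (Exp.substTm j (s.shiftTy 0) e)
  | j, s, .tapp e T => .tapp (Exp.substTm j s e) T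
  | j, s, .fold e => .fold (Exp.substTm j s e)
  | j, s, .unfold e => .unfold (Exp.substTm j s e)
  | j, s, .fix e => .fix (Exp.substTm j s e)
  | j, s, .letrec e1 e2 =>
      .letrec (Exp.substTm (j + 1) (s.shiftTm 0) e1) (Exp.substTm (j + 1) (s.shiftTm 0) e2)
  | j, s, .raise e => .raise (Exp.substTm j s e)
  | j, s, .tryw e1 e2 => .tryw (Exp.substTm j s e1) (Exp.substTm j s e2)
termination_by j s e => sizeOf e

/-- `e.open0 s` is `e[s/x]` where `x` is the innermost (de Bruijn 0) bound
term variable of `e`. -/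
def Exp.open0 (e s : Exp) : Exp := Exp.substTm 0 s e

/-- Values: `true | false | z | succ v | λx.e | nil | cons v v | inl v |
inr v | ΛX.e | fold v`. -/
inductive Value : Exp → Prop
  | tt : Value .tt
  | ff : Value .ff
  | z : Value .z
  | succ {v : Exp} : Value v → Value (.succ v)
  | lam (e : Exp) : Value (.lam e)
  | nil : Value .nil
  | cons {v1 v2 : Exp} : Value v1 → Value v2 → Value (.cons v1 v2)
  | inl {v : Exp} : Value v → Value (.inl v)
  | inr {v : Exp} : Value v → Value (.inr v)
  | tlam (e : Exp) : Value (.tlam e)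
  | fold {v : Exp} : Value v → Value (.fold v)

/-- Errors: `er ::= raise v`. -/
inductive IsError : Exp → Prop
  | raise {v : Exp} : Value v → IsError (.raise v)

/-- A typing environment is a list of types for the term variables (the head
is the most recently bound variable).  `Γ, x:T` is represented as `T :: Γ`,
and `Γ, X` (binding a type variable) as `Γ.map (Ty.shift 0)`. -/
abbrev TyEnv := List Ty

/-- The typing judgment `Γ ⊢ e : T` of Fpl. -/
inductive HasType : TyEnv → Exp → Ty → Prop
  | var {Γ : TyEnv} {x : ℕ} {T : Ty} :
      Γ[x]? = some T → HasType Γ (.var x) T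
  | tt {Γ : TyEnv} : HasType Γ .tt .bool
  | ff {Γ : TyEnv} : HasType Γ .ff .bool
  | ite {Γ : TyEnv} {e1 e2 e3 : Exp} {T : Ty} :
      HasType Γ e1 .bool → HasType Γ e2 T → HasType Γ e3 T →
      HasType Γ (.ite e1 e2 e3) T
  | z {Γ : TyEnv} : HasType Γ .z .int
  | succ {Γ : TyEnv} {e : Exp} :
      HasType Γ e .int → HasType Γ (.succ e) .int
  | pred {Γ : TyEnv} {e : Exp} :
      HasType Γ e .int → HasType Γ (.pred e) .int
  | isZero {Γ : TyEnv} {e : Exp} :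
      HasType Γ e .int → HasType Γ (.isZero e) .bool
  | lam {Γ : TyEnv} {e : Exp} {T1 T2 : Ty} :
      HasType (T1 :: Γ) e T2 → HasType Γ (.lam e) (.arrow T1 T2)
  | app {Γ : TyEnv} {e1 e2 : Exp} {T1 T2 : Ty} :
      HasType Γ e1 (.arrow T1 T2) → HasType Γ e2 T1 →
      HasType Γ (.app e1 e2) T2
  | nil {Γ : TyEnv} {T : Ty} : HasType Γ .nil (.list T)
  | cons {Γ : TyEnv} {e1 e2 : Exp} {T : Ty} :
      HasType Γ e1 T → HasType Γ e2 (.list T) →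
      HasType Γ (.cons e1 e2) (.list T)
  | head {Γ : TyEnv} {e : Exp} {T : Ty} :
      HasType Γ e (.list T) → HasType Γ (.head e) T
  | tail {Γ : TyEnv} {e : Exp} {T : Ty} :
      HasType Γ e (.list T) → HasType Γ (.tail e) (.list T)
  | isNil {Γ : TyEnv} {e : Exp} {T : Ty} :
      HasType Γ e (.list T) → HasType Γ (.isNil e) .bool
  | inl {Γ : TyEnv} {e : Exp} {T1 T2 : Ty} :
      HasType Γ e T1 → HasType Γ (.inl e) (.sum T1 T2)
  | inr {Γ : TyEnv} {e : Exp} {T1 T2 : Ty} :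
      HasType Γ e T2 → HasType Γ (.inr e) (.sum T1 T2)
  | caseE {Γ : TyEnv} {e1 e2 e3 : Exp} {T1 T2 T : Ty} :
      HasType Γ e1 (.sum T1 T2) → HasType (T1 :: Γ) e2 T →
      HasType (T2 :: Γ) e3 T → HasType Γ (.caseE e1 e2 e3) T
  | tlam {Γ : TyEnv} {e : Exp} {T : Ty} :
      HasType (Γ.map (Ty.shift 0)) e T → HasType Γ (.tlam e) (.all T)
  | tapp {Γ : TyEnv} {e : Exp} {T1 T2 : Ty} :
      HasType Γ e (.all T2) → HasType Γ (.tapp e T1) (T2.open0 T1)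
  | fold {Γ : TyEnv} {e : Exp} {T : Ty} :
      HasType Γ e (T.open0 (.mu T)) → HasType Γ (.fold e) (.mu T)
  | unfold {Γ : TyEnv} {e : Exp} {T : Ty} :
      HasType Γ e (.mu T) → HasType Γ (.unfold e) (T.open0 (.mu T))
  | fix {Γ : TyEnv} {e : Exp} {T : Ty} :
      HasType Γ e (.arrow T T) → HasType Γ (.fix e) T
  | letrec {Γ : TyEnv} {e1 e2 : Exp} {T1 T2 : Ty} :
      HasType (T1 :: Γ) e1 T1 → HasType (T1 :: Γ) e2 T2 →
      HasType Γ (.letrec e1 e2) T2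
  | raise {Γ : TyEnv} {e : Exp} {T : Ty} :
      HasType Γ e .int → HasType Γ (.raise e) T
  | tryw {Γ : TyEnv} {e1 e2 : Exp} {T : Ty} :
      HasType Γ e1 T → HasType Γ e2 (.arrow .int T) →
      HasType Γ (.tryw e1 e2) T

/-- Call-by-value evaluation contexts `E` of Fpl (single-hole, with the hole
as base case). -/
inductive ECtx : Type
  | hole : ECtx
  | ite : ECtx → Exp → Exp → ECtx
  | succ : ECtx → ECtx
  | pred : ECtx → ECtx
  | isZero : ECtx → ECtx
  | appL : ECtx → Exp → ECtx                       -- E e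
  | appR (v : Exp) (hv : Value v) : ECtx → ECtx    -- v E
  | consL : ECtx → Exp → ECtx                      -- cons E e
  | consR (v : Exp) (hv : Value v) : ECtx → ECtx   -- cons v E
  | head : ECtx → ECtx
  | tail : ECtx → ECtx
  | isNil : ECtx → ECtx
  | inl : ECtx → ECtx
  | inr : ECtx → ECtx
  | caseE : ECtx → Exp → Exp → ECtx
  | tapp : ECtx → Ty → ECtx                        -- E [T]
  | fold : ECtx → ECtx
  | unfold : ECtx → ECtx
  | fix : ECtx → ECtx
  | letrec : ECtx → Exp → ECtx                     -- letrec x = E in e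
  | raise : ECtx → ECtx
  | tryw : ECtx → Exp → ECtx                       -- try E with e

/-- `E.plug e` plugs the expression `e` into the hole of the context `E`. -/
def ECtx.plug : ECtx → Exp → Exp
  | .hole, e => e
  | .ite E e2 e3, e => .ite (E.plug e) e2 e3
  | .succ E, e => .succ (E.plug e)
  | .pred E, e => .pred (E.plug e)
  | .isZero E, e => .isZero (E.plug e)
  | .appL E e2, e => .app (E.plug e) e2
  | .appR v _ E, e => .app v (E.plug e)
  | .consL E e2, e => .cons (E.plug e) e2
  | .consR v _ E, e => .cons v (E.plug e)
  | .head E, e => .head (E.plug e)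
  | .tail E, e => .tail (E.plug e)
  | .isNil E, e => .isNil (E.plug e)
  | .inl E, e => .inl (E.plug e)
  | .inr E, e => .inr (E.plug e)
  | .caseE E e2 e3, e => .caseE (E.plug e) e2 e3
  | .tapp E T, e => .tapp (E.plug e) T
  | .fold E, e => .fold (E.plug e)
  | .unfold E, e => .unfold (E.plug e)
  | .fix E, e => .fix (E.plug e)
  | .letrec E e2, e => .letrec (E.plug e) e2
  | .raise E, e => .raise (E.plug e)
  | .tryw E e2, e => .tryw (E.plug e) e2

/-- An error context `F` is an evaluation context that does not use the
`try E with e` case. -/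
def ECtx.IsErrCtx : ECtx → Prop
  | .hole => True
  | .ite E _ _ => E.IsErrCtx
  | .succ E => E.IsErrCtx
  | .pred E => E.IsErrCtx
  | .isZero E => E.IsErrCtx
  | .appL E _ => E.IsErrCtx
  | .appR _ _ E => E.IsErrCtx
  | .consL E _ => E.IsErrCtx
  | .consR _ _ E => E.IsErrCtx
  | .head E => E.IsErrCtx
  | .tail E => E.IsErrCtx
  | .isNil E => E.IsErrCtx
  | .inl E => E.IsErrCtx
  | .inr E => E.IsErrCtx
  | .caseE E _ _ => E.IsErrCtx
  | .tapp E _ => E.IsErrCtx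
  | .fold E => E.IsErrCtx
  | .unfold E => E.IsErrCtx
  | .fix E => E.IsErrCtx
  | .letrec E _ => E.IsErrCtx
  | .raise E => E.IsErrCtx
  | .tryw _ _ => False

/-- The one-step reduction `e → e'` of Fpl: the top-level reduction rules,
closed under evaluation contexts (rule (ctx)), together with the error
propagation rule (err-ctx) for error contexts. -/
inductive Step : Exp → Exp → Prop
  | ifTrue {e1 e2 : Exp} : Step (.ite .tt e1 e2) e1
  | ifFalse {e1 e2 : Exp} : Step (.ite .ff e1 e2) e2
  | predZ : Step (.pred .z) (.raise .z)
  | predSucc {e : Exp} : Step (.pred (.succ e)) e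
  | isZeroZ : Step (.isZero .z) .tt
  | isZeroSucc {e : Exp} : Step (.isZero (.succ e)) .ff
  | beta {e v : Exp} : Value v → Step (.app (.lam e) v) (e.open0 v)
  | headNil : Step (.head .nil) (.raise .z)
  | headCons {v1 v2 : Exp} : Value v1 → Value v2 →
      Step (.head (.cons v1 v2)) v1
  | tailNil : Step (.tail .nil) (.raise (.succ .z))
  | tailCons {v1 v2 : Exp} : Value v1 → Value v2 →
      Step (.tail (.cons v1 v2)) v2
  | isNilNil : Step (.isNil .nil) .tt
  | isNilCons {v1 v2 : Exp} : Value v1 → Value v2 →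
      Step (.isNil (.cons v1 v2)) .ff
  | caseInl {v e2 e3 : Exp} : Value v →
      Step (.caseE (.inl v) e2 e3) (e2.open0 v)
  | caseInr {v e2 e3 : Exp} : Value v →
      Step (.caseE (.inr v) e2 e3) (e3.open0 v)
  | unfoldFold {v : Exp} : Value v → Step (.unfold (.fold v)) v
  | fixV {v : Exp} : Value v → Step (.fix v) (.app v (.fix v))
  | letrecV {v e : Exp} : Value v →
      Step (.letrec v e) (e.open0 (.fix (.lam v)))
  | tryV {v e : Exp} : Value v → Step (.tryw v e) v
  | tryRaise {v e : Exp} : Value v →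
      Step (.tryw (.raise v) e) (.app e v)
  | ctx (E : ECtx) {e e' : Exp} : Step e e' → Step (E.plug e) (E.plug e')
  | errCtx (F : ECtx) {v : Exp} : F.IsErrCtx → Value v →
      Step (F.plug (.raise v)) (.raise v)

/-- `e →* e'`: the reflexive-transitive closure of one-step reduction. -/
abbrev Steps : Exp → Exp → Prop := Relation.ReflTransGen Step

end Fpl

namespace Fpl

theorem Ty.shift_shift (T : Ty) : ∀ (c c' : ℕ), c ≤ c' →
    (T.shift c).shift (c' + 1) = (T.shift c').shift c := by
  induction T with
  | bool => intros; rfl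
  | int => intros; rfl
  | arrow T1 T2 ih1 ih2 => intro c c' h; simp [Ty.shift, ih1 c c' h, ih2 c c' h]
  | list T ih => intro c c' h; simp [Ty.shift, ih c c' h]
  | sum T1 T2 ih1 ih2 => intro c c' h; simp [Ty.shift, ih1 c c' h, ih2 c c' h]
  | var X => intro c c' h; simp only [Ty.shift]; split_ifs <;> simp [Ty.shift] <;> split_ifs <;>
      first | rfl | (simp; omega) | omega
  | all T ih => intro c c' h; simp [Ty.shift, ih (c+1) (c'+1) (by omega)]
  | mu T ih => intro c c' h; simp [Ty.shift, ih (c+1) (c'+1) (by omega)]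

theorem Ty.shift_subst (T : Ty) : ∀ (j c : ℕ) (S : Ty), j ≤ c →
    (Ty.subst j S T).shift c = Ty.subst j (S.shift c) (T.shift (c + 1)) := by
  induction T with
  | bool => intros; simp [Ty.shift, Ty.subst]
  | int => intros; simp [Ty.shift, Ty.subst]
  | arrow T1 T2 ih1 ih2 => intro j c S h; simp [Ty.shift, Ty.subst, ih1 j c S h, ih2 j c S h]
  | list T ih => intro j c S h; simp [Ty.shift, Ty.subst, ih j c S h]
  | sum T1 T2 ih1 ih2 => intro j c S h; simp [Ty.shift, Ty.subst, ih1 j c S h, ih2 j c S h]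
  | var X => intro j c S h
             simp only [Ty.shift, Ty.subst]
             split_ifs <;> simp [Ty.shift, Ty.subst] <;> split_ifs <;>
               first | rfl | (simp; omega) | omega
  | all T ih => intro j c S h
                simp [Ty.shift, Ty.subst, ih (j+1) (c+1) (S.shift 0) (by omega),
                  Ty.shift_shift S 0 c (by omega)]
  | mu T ih => intro j c S h
               simp [Ty.shift, Ty.subst, ih (j+1) (c+1) (S.shift 0) (by omega),
                 Ty.shift_shift S 0 c (by omega)]

theorem shiftTy_preserves {Γ : TyEnv} {e : Exp} {T : Ty} (h : HasType Γ e T) :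
    ∀ c, HasType (Γ.map (Ty.shift c)) (e.shiftTy c) (T.shift c) := by
  induction h with
  | var hx =>
      intro c
      apply HasType.var
      rw [List.getElem?_map, hx]
      rfl
  | tt => intro c; exact .tt
  | ff => intro c; exact .ff
  | ite _ _ _ ih1 ih2 ih3 => intro c; exact .ite (ih1 c) (ih2 c) (ih3 c)
  | z => intro c; exact .z
  | succ _ ih => intro c; exact .succ (ih c)
  | pred _ ih => intro c; exact .pred (ih c)
  | isZero _ ih => intro c; exact .isZero (ih c)
  | lam _ ih => intro c; exact .lam (ih c)
  | app _ _ ih1 ih2 => intro c; exact .app (ih1 c) (ih2 c)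
  | nil => intro c; exact .nil
  | cons _ _ ih1 ih2 => intro c; exact .cons (ih1 c) (ih2 c)
  | head _ ih => intro c; exact .head (ih c)
  | tail _ ih => intro c; exact .tail (ih c)
  | isNil _ ih => intro c; exact .isNil (ih c)
  | inl _ ih => intro c; exact .inl (ih c)
  | inr _ ih => intro c; exact .inr (ih c)
  | caseE _ _ _ ih1 ih2 ih3 => intro c; exact .caseE (ih1 c) (ih2 c) (ih3 c)
  | @tlam Γ e T _ ih =>
      intro c
      apply HasType.tlam
      have := ih (c + 1)
      rwa [show (Γ.map (Ty.shift 0)).map (Ty.shift (c+1))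
          = ((Γ.map (Ty.shift c)).map (Ty.shift 0)) by
        simp only [List.map_map]; apply List.map_congr_left; intro x _
        simp only [Function.comp_apply]; exact Ty.shift_shift x 0 c (Nat.zero_le c)] at this
  | @tapp Γ e T1 T2 _ ih =>
      intro c
      have : (T2.open0 T1).shift c = (T2.shift (c+1)).open0 (T1.shift c) :=
        Ty.shift_subst T2 0 c T1 (Nat.zero_le c)
      rw [this]
      exact HasType.tapp (ih c)
  | @fold Γ e T _ ih =>
      intro c
      have := ih c
      rw [Ty.open0, Ty.shift_subst T 0 c (.mu T) (Nat.zero_le c)] at this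
      have h2 := HasType.fold (T := T.shift (c+1)) (by simpa [Ty.shift, Ty.open0] using this)
      simpa [Ty.shift, Exp.shiftTy] using h2
  | @unfold Γ e T _ ih =>
      intro c
      have := HasType.unfold (ih c)
      rw [Ty.open0, Ty.shift_subst T 0 c (.mu T) (Nat.zero_le c)]
      simpa [Ty.shift, Exp.shiftTy, Ty.open0] using this
  | fix _ ih => intro c; exact .fix (ih c)
  | letrec _ _ ih1 ih2 => intro c; exact .letrec (ih1 c) (ih2 c)
  | raise _ ih => intro c; exact .raise (ih c)
  | tryw _ _ ih1 ih2 => intro c; exact .tryw (ih1 c) (ih2 c)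

theorem weaken {Δ : TyEnv} {e : Exp} {T : Ty} (h : HasType Δ e T) :
    ∀ (Γ1 Γ2 : TyEnv) (U : Ty), Δ = Γ1 ++ Γ2 →
      HasType (Γ1 ++ U :: Γ2) (e.shiftTm Γ1.length) T := by
  induction h with
  | @var Γ x T hx =>
      intro Γ1 Γ2 U hΔ; subst hΔ
      simp only [Exp.shiftTm]
      split
      · apply HasType.var
        rw [List.getElem?_append_left (by assumption),
          ← List.getElem?_append_left (by assumption) (l₂ := Γ2)]
        exact hx
      · next hge =>
        apply HasType.var
        rw [List.getElem?_append_right (by omega)]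
        rw [List.getElem?_append_right (by omega)] at hx
        simpa [List.getElem?_cons, show x + 1 - Γ1.length ≠ 0 by omega,
          show x + 1 - Γ1.length - 1 = x - Γ1.length by omega] using hx
  | tt => intro Γ1 Γ2 U hΔ; exact .tt
  | ff => intro Γ1 Γ2 U hΔ; exact .ff
  | ite _ _ _ ih1 ih2 ih3 => intro Γ1 Γ2 U hΔ
                             exact .ite (ih1 Γ1 Γ2 U hΔ) (ih2 Γ1 Γ2 U hΔ) (ih3 Γ1 Γ2 U hΔ)
  | z => intro Γ1 Γ2 U hΔ; exact .z
  | succ _ ih => intro Γ1 Γ2 U hΔ; exact .succ (ih Γ1 Γ2 U hΔ)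
  | pred _ ih => intro Γ1 Γ2 U hΔ; exact .pred (ih Γ1 Γ2 U hΔ)
  | isZero _ ih => intro Γ1 Γ2 U hΔ; exact .isZero (ih Γ1 Γ2 U hΔ)
  | @lam Γ e T1 T2 _ ih =>
      intro Γ1 Γ2 U hΔ; subst hΔ
      exact .lam (ih (T1 :: Γ1) Γ2 U rfl)
  | app _ _ ih1 ih2 => intro Γ1 Γ2 U hΔ; exact .app (ih1 Γ1 Γ2 U hΔ) (ih2 Γ1 Γ2 U hΔ)
  | nil => intro Γ1 Γ2 U hΔ; exact .nil
  | cons _ _ ih1 ih2 => intro Γ1 Γ2 U hΔ; exact .cons (ih1 Γ1 Γ2 U hΔ) (ih2 Γ1 Γ2 U hΔ)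
  | head _ ih => intro Γ1 Γ2 U hΔ; exact .head (ih Γ1 Γ2 U hΔ)
  | tail _ ih => intro Γ1 Γ2 U hΔ; exact .tail (ih Γ1 Γ2 U hΔ)
  | isNil _ ih => intro Γ1 Γ2 U hΔ; exact .isNil (ih Γ1 Γ2 U hΔ)
  | inl _ ih => intro Γ1 Γ2 U hΔ; exact .inl (ih Γ1 Γ2 U hΔ)
  | inr _ ih => intro Γ1 Γ2 U hΔ; exact .inr (ih Γ1 Γ2 U hΔ)
  | @caseE Γ e1 e2 e3 T1 T2 T _ _ _ ih1 ih2 ih3 =>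
      intro Γ1 Γ2 U hΔ; subst hΔ
      have h2 := ih2 (T1 :: Γ1) Γ2 U rfl
      have h3 := ih3 (T2 :: Γ1) Γ2 U rfl
      exact .caseE (ih1 Γ1 Γ2 U rfl) h2 h3
  | @tlam Γ e T _ ih =>
      intro Γ1 Γ2 U hΔ; subst hΔ
      apply HasType.tlam
      have := ih (Γ1.map (Ty.shift 0)) (Γ2.map (Ty.shift 0)) (U.shift 0) (by simp)
      simpa using this
  | tapp _ ih => intro Γ1 Γ2 U hΔ; exact .tapp (ih Γ1 Γ2 U hΔ)
  | fold _ ih => intro Γ1 Γ2 U hΔ; exact .fold (ih Γ1 Γ2 U hΔ)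
  | unfold _ ih => intro Γ1 Γ2 U hΔ; exact .unfold (ih Γ1 Γ2 U hΔ)
  | fix _ ih => intro Γ1 Γ2 U hΔ; exact .fix (ih Γ1 Γ2 U hΔ)
  | @letrec Γ e1 e2 T1 T2 _ _ ih1 ih2 =>
      intro Γ1 Γ2 U hΔ; subst hΔ
      exact .letrec (ih1 (T1 :: Γ1) Γ2 U rfl) (ih2 (T1 :: Γ1) Γ2 U rfl)
  | raise _ ih => intro Γ1 Γ2 U hΔ; exact .raise (ih Γ1 Γ2 U hΔ)
  | tryw _ _ ih1 ih2 => intro Γ1 Γ2 U hΔ; exact .tryw (ih1 Γ1 Γ2 U hΔ) (ih2 Γ1 Γ2 U hΔ)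

theorem substTm_preserves {Δ : TyEnv} {e : Exp} {T : Ty} (h : HasType Δ e T) :
    ∀ (Γ1 Γ2 : TyEnv) (T1 : Ty) (s : Exp), Δ = Γ1 ++ T1 :: Γ2 →
      HasType (Γ1 ++ Γ2) s T1 →
      HasType (Γ1 ++ Γ2) (Exp.substTm Γ1.length s e) T := by
  induction h with
  | @var Γ x T hx =>
      intro Γ1 Γ2 T1 s hΔ hs; subst hΔ
      simp only [Exp.substTm]
      split
      · next heq =>
        subst heq
        rw [List.getElem?_append_right (by omega)] at hx
        simp at hx
        subst hx
        exact hs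
      · next hne =>
        split
        · next hlt =>
          apply HasType.var
          rw [List.getElem?_append_right (by omega), List.getElem?_cons,
            if_neg (by omega)] at hx
          rw [List.getElem?_append_right (by omega)]
          rw [show x - Γ1.length - 1 = x - 1 - Γ1.length by omega] at hx
          exact hx
        · next hge =>
          apply HasType.var
          have hlt : x < Γ1.length := by omega
          rw [List.getElem?_append_left hlt] at hx
          rw [List.getElem?_append_left hlt]
          exact hx
  | tt => intros; simp only [Exp.substTm]; exact .tt
  | ff => intros; simp only [Exp.substTm]; exact .ff
  | ite _ _ _ ih1 ih2 ih3 => intro Γ1 Γ2 T1 s hΔ hs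
                             simp only [Exp.substTm]
                             exact .ite (ih1 Γ1 Γ2 T1 s hΔ hs) (ih2 Γ1 Γ2 T1 s hΔ hs)
                               (ih3 Γ1 Γ2 T1 s hΔ hs)
  | z => intros; simp only [Exp.substTm]; exact .z
  | succ _ ih => intro Γ1 Γ2 T1 s hΔ hs; simp only [Exp.substTm]; exact .succ (ih Γ1 Γ2 T1 s hΔ hs)
  | pred _ ih => intro Γ1 Γ2 T1 s hΔ hs; simp only [Exp.substTm]; exact .pred (ih Γ1 Γ2 T1 s hΔ hs)
  | isZero _ ih => intro Γ1 Γ2 T1 s hΔ hs; simp only [Exp.substTm]; exact .isZero (ih Γ1 Γ2 T1 s hΔ hs)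
  | @lam Γ e Ta Tb _ ih =>
      intro Γ1 Γ2 T1 s hΔ hs; subst hΔ
      simp only [Exp.substTm]
      apply HasType.lam
      have hw : HasType (Ta :: (Γ1 ++ Γ2)) (s.shiftTm 0) T1 := weaken hs [] (Γ1 ++ Γ2) Ta rfl
      simpa using ih (Ta :: Γ1) Γ2 T1 (s.shiftTm 0) rfl hw
  | app _ _ ih1 ih2 => intro Γ1 Γ2 T1 s hΔ hs
                       simp only [Exp.substTm]
                       exact .app (ih1 Γ1 Γ2 T1 s hΔ hs) (ih2 Γ1 Γ2 T1 s hΔ hs)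
  | nil => intros; simp only [Exp.substTm]; exact .nil
  | cons _ _ ih1 ih2 => intro Γ1 Γ2 T1 s hΔ hs
                        simp only [Exp.substTm]
                        exact .cons (ih1 Γ1 Γ2 T1 s hΔ hs) (ih2 Γ1 Γ2 T1 s hΔ hs)
  | head _ ih => intro Γ1 Γ2 T1 s hΔ hs; simp only [Exp.substTm]; exact .head (ih Γ1 Γ2 T1 s hΔ hs)
  | tail _ ih => intro Γ1 Γ2 T1 s hΔ hs; simp only [Exp.substTm]; exact .tail (ih Γ1 Γ2 T1 s hΔ hs)
  | isNil _ ih => intro Γ1 Γ2 T1 s hΔ hs; simp only [Exp.substTm]; exact .isNil (ih Γ1 Γ2 T1 s hΔ hs)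
  | inl _ ih => intro Γ1 Γ2 T1 s hΔ hs; simp only [Exp.substTm]; exact .inl (ih Γ1 Γ2 T1 s hΔ hs)
  | inr _ ih => intro Γ1 Γ2 T1 s hΔ hs; simp only [Exp.substTm]; exact .inr (ih Γ1 Γ2 T1 s hΔ hs)
  | @caseE Γ e1 e2 e3 Ta Tb T _ _ _ ih1 ih2 ih3 =>
      intro Γ1 Γ2 T1 s hΔ hs; subst hΔ
      simp only [Exp.substTm]
      apply HasType.caseE (ih1 Γ1 Γ2 T1 s rfl hs)
      · simpa using ih2 (Ta :: Γ1) Γ2 T1 (s.shiftTm 0)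
          rfl (weaken hs [] (Γ1 ++ Γ2) Ta rfl)
      · simpa using ih3 (Tb :: Γ1) Γ2 T1 (s.shiftTm 0)
          rfl (weaken hs [] (Γ1 ++ Γ2) Tb rfl)
  | @tlam Γ e T _ ih =>
      intro Γ1 Γ2 T1 s hΔ hs; subst hΔ
      simp only [Exp.substTm]
      apply HasType.tlam
      have hs' : HasType ((Γ1 ++ Γ2).map (Ty.shift 0)) (s.shiftTy 0) (T1.shift 0) :=
        shiftTy_preserves hs 0
      have := ih (Γ1.map (Ty.shift 0)) (Γ2.map (Ty.shift 0)) (T1.shift 0) (s.shiftTy 0)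
        (by simp) (by simpa using hs')
      simpa using this
  | tapp _ ih => intro Γ1 Γ2 T1 s hΔ hs; simp only [Exp.substTm]; exact .tapp (ih Γ1 Γ2 T1 s hΔ hs)
  | fold _ ih => intro Γ1 Γ2 T1 s hΔ hs; simp only [Exp.substTm]; exact .fold (ih Γ1 Γ2 T1 s hΔ hs)
  | unfold _ ih => intro Γ1 Γ2 T1 s hΔ hs; simp only [Exp.substTm]; exact .unfold (ih Γ1 Γ2 T1 s hΔ hs)
  | fix _ ih => intro Γ1 Γ2 T1 s hΔ hs; simp only [Exp.substTm]; exact .fix (ih Γ1 Γ2 T1 s hΔ hs)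
  | @letrec Γ e1 e2 Ta Tb _ _ ih1 ih2 =>
      intro Γ1 Γ2 T1 s hΔ hs; subst hΔ
      simp only [Exp.substTm]
      apply HasType.letrec
      · simpa using ih1 (Ta :: Γ1) Γ2 T1 (s.shiftTm 0)
          rfl (weaken hs [] (Γ1 ++ Γ2) Ta rfl)
      · simpa using ih2 (Ta :: Γ1) Γ2 T1 (s.shiftTm 0)
          rfl (weaken hs [] (Γ1 ++ Γ2) Ta rfl)
  | raise _ ih => intro Γ1 Γ2 T1 s hΔ hs; simp only [Exp.substTm]; exact .raise (ih Γ1 Γ2 T1 s hΔ hs)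
  | tryw _ _ ih1 ih2 => intro Γ1 Γ2 T1 s hΔ hs
                        simp only [Exp.substTm]
                        exact .tryw (ih1 Γ1 Γ2 T1 s hΔ hs) (ih2 Γ1 Γ2 T1 s hΔ hs)

/-- Substitution at top level: `e.open0 s`. -/
theorem open0_preserves {Γ : TyEnv} {e s : Exp} {T1 T : Ty}
    (he : HasType (T1 :: Γ) e T) (hs : HasType Γ s T1) :
    HasType Γ (e.open0 s) T :=
  substTm_preserves he [] Γ T1 s rfl hs

theorem value_int_any {v : Exp} (hv : Value v) :
    ∀ {Δ Γ : TyEnv}, HasType Δ v .int → HasType Γ v .int := by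
  induction hv with
  | z => intro Δ Γ _; exact .z
  | succ _ ih => intro Δ Γ h; cases h with | succ h => exact .succ (ih h)
  | tt => intro Δ Γ h; cases h
  | ff => intro Δ Γ h; cases h
  | lam e => intro Δ Γ h; cases h
  | nil => intro Δ Γ h; cases h
  | cons _ _ _ _ => intro Δ Γ h; cases h
  | inl _ _ => intro Δ Γ h; cases h
  | inr _ _ => intro Δ Γ h; cases h
  | tlam e => intro Δ Γ h; cases h
  | fold _ _ => intro Δ Γ h; cases h

theorem plug_inv (E : ECtx) {Γ : TyEnv} (e : Exp) (T : Ty) (h : HasType Γ (E.plug e) T) :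
    ∃ Δ S, HasType Δ e S ∧ ∀ e'', HasType Δ e'' S → HasType Γ (E.plug e'') T := by
  induction E generalizing Γ T with
  | hole => exact ⟨Γ, T, h, fun _ h' => h'⟩
  | ite E e2 e3 ih =>
      simp only [ECtx.plug] at h ⊢
      cases h with | ite h1 h2 h3 =>
        obtain ⟨Δ, S, hS, hr⟩ := ih _ h1
        exact ⟨Δ, S, hS, fun e'' he => .ite (hr e'' he) h2 h3⟩
  | succ E ih =>
      simp only [ECtx.plug] at h ⊢
      cases h with | succ h1 =>
        obtain ⟨Δ, S, hS, hr⟩ := ih _ h1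
        exact ⟨Δ, S, hS, fun e'' he => .succ (hr e'' he)⟩
  | pred E ih =>
      simp only [ECtx.plug] at h ⊢
      cases h with | pred h1 =>
        obtain ⟨Δ, S, hS, hr⟩ := ih _ h1
        exact ⟨Δ, S, hS, fun e'' he => .pred (hr e'' he)⟩
  | isZero E ih =>
      simp only [ECtx.plug] at h ⊢
      cases h with | isZero h1 =>
        obtain ⟨Δ, S, hS, hr⟩ := ih _ h1
        exact ⟨Δ, S, hS, fun e'' he => .isZero (hr e'' he)⟩
  | appL E e2 ih =>
      simp only [ECtx.plug] at h ⊢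
      cases h with | app h1 h2 =>
        obtain ⟨Δ, S, hS, hr⟩ := ih _ h1
        exact ⟨Δ, S, hS, fun e'' he => .app (hr e'' he) h2⟩
  | appR v hv E ih =>
      simp only [ECtx.plug] at h ⊢
      cases h with | app h1 h2 =>
        obtain ⟨Δ, S, hS, hr⟩ := ih _ h2
        exact ⟨Δ, S, hS, fun e'' he => .app h1 (hr e'' he)⟩
  | consL E e2 ih =>
      simp only [ECtx.plug] at h ⊢
      cases h with | cons h1 h2 =>
        obtain ⟨Δ, S, hS, hr⟩ := ih _ h1
        exact ⟨Δ, S, hS, fun e'' he => .cons (hr e'' he) h2⟩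
  | consR v hv E ih =>
      simp only [ECtx.plug] at h ⊢
      cases h with | cons h1 h2 =>
        obtain ⟨Δ, S, hS, hr⟩ := ih _ h2
        exact ⟨Δ, S, hS, fun e'' he => .cons h1 (hr e'' he)⟩
  | head E ih =>
      simp only [ECtx.plug] at h ⊢
      cases h with | head h1 =>
        obtain ⟨Δ, S, hS, hr⟩ := ih _ h1
        exact ⟨Δ, S, hS, fun e'' he => .head (hr e'' he)⟩
  | tail E ih =>
      simp only [ECtx.plug] at h ⊢
      cases h with | tail h1 =>
        obtain ⟨Δ, S, hS, hr⟩ := ih _ h1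
        exact ⟨Δ, S, hS, fun e'' he => .tail (hr e'' he)⟩
  | isNil E ih =>
      simp only [ECtx.plug] at h ⊢
      cases h with | isNil h1 =>
        obtain ⟨Δ, S, hS, hr⟩ := ih _ h1
        exact ⟨Δ, S, hS, fun e'' he => .isNil (hr e'' he)⟩
  | inl E ih =>
      simp only [ECtx.plug] at h ⊢
      cases h with | inl h1 =>
        obtain ⟨Δ, S, hS, hr⟩ := ih _ h1
        exact ⟨Δ, S, hS, fun e'' he => .inl (hr e'' he)⟩
  | inr E ih =>
      simp only [ECtx.plug] at h ⊢
      cases h with | inr h1 =>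
        obtain ⟨Δ, S, hS, hr⟩ := ih _ h1
        exact ⟨Δ, S, hS, fun e'' he => .inr (hr e'' he)⟩
  | caseE E e2 e3 ih =>
      simp only [ECtx.plug] at h ⊢
      cases h with | caseE h1 h2 h3 =>
        obtain ⟨Δ, S, hS, hr⟩ := ih _ h1
        exact ⟨Δ, S, hS, fun e'' he => .caseE (hr e'' he) h2 h3⟩
  | tapp E T1 ih =>
      simp only [ECtx.plug] at h ⊢
      cases h with | tapp h1 =>
        obtain ⟨Δ, S, hS, hr⟩ := ih _ h1
        exact ⟨Δ, S, hS, fun e'' he => .tapp (hr e'' he)⟩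
  | fold E ih =>
      simp only [ECtx.plug] at h ⊢
      cases h with | fold h1 =>
        obtain ⟨Δ, S, hS, hr⟩ := ih _ h1
        exact ⟨Δ, S, hS, fun e'' he => .fold (hr e'' he)⟩
  | unfold E ih =>
      simp only [ECtx.plug] at h ⊢
      cases h with | unfold h1 =>
        obtain ⟨Δ, S, hS, hr⟩ := ih _ h1
        exact ⟨Δ, S, hS, fun e'' he => .unfold (hr e'' he)⟩
  | fix E ih =>
      simp only [ECtx.plug] at h ⊢
      cases h with | fix h1 =>
        obtain ⟨Δ, S, hS, hr⟩ := ih _ h1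
        exact ⟨Δ, S, hS, fun e'' he => .fix (hr e'' he)⟩
  | letrec E e2 ih =>
      simp only [ECtx.plug] at h ⊢
      cases h with | letrec h1 h2 =>
        obtain ⟨Δ, S, hS, hr⟩ := ih _ h1
        exact ⟨Δ, S, hS, fun e'' he => .letrec (hr e'' he) h2⟩
  | raise E ih =>
      simp only [ECtx.plug] at h ⊢
      cases h with | raise h1 =>
        obtain ⟨Δ, S, hS, hr⟩ := ih _ h1
        exact ⟨Δ, S, hS, fun e'' he => .raise (hr e'' he)⟩
  | tryw E e2 ih =>
      simp only [ECtx.plug] at h ⊢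
      cases h with | tryw h1 h2 =>
        obtain ⟨Δ, S, hS, hr⟩ := ih _ h1
        exact ⟨Δ, S, hS, fun e'' he => .tryw (hr e'' he) h2⟩

end Fpl

namespace Fpl

theorem preservation_gen {e e' : Exp} (hs : Step e e') :
    ∀ (Γ : TyEnv) (T : Ty), HasType Γ e T → HasType Γ e' T := by
  induction hs with
  | ifTrue => intro Γ T h; cases h; assumption
  | ifFalse => intro Γ T h; cases h; assumption
  | predZ => intro Γ T h; exact .raise .z
  | predSucc => intro Γ T h; cases h with | pred h1 => cases h1; assumption
  | isZeroZ => intro Γ T h; cases h; exact .tt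
  | isZeroSucc => intro Γ T h; cases h; exact .ff
  | beta hv =>
      intro Γ T h
      cases h with | app h1 h2 =>
        cases h1 with | lam h1 => exact open0_preserves h1 h2
  | headNil => intro Γ T h; exact .raise .z
  | headCons hv1 hv2 =>
      intro Γ T h; cases h with | head h1 => cases h1; assumption
  | tailNil => intro Γ T h; exact .raise (.succ .z)
  | tailCons hv1 hv2 =>
      intro Γ T h; cases h with | tail h1 => cases h1; assumption
  | isNilNil => intro Γ T h; cases h; exact .tt
  | isNilCons hv1 hv2 => intro Γ T h; cases h; exact .ff
  | caseInl hv =>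
      intro Γ T h
      cases h with | caseE h1 h2 h3 =>
        cases h1 with | inl h1 => exact open0_preserves h2 h1
  | caseInr hv =>
      intro Γ T h
      cases h with | caseE h1 h2 h3 =>
        cases h1 with | inr h1 => exact open0_preserves h3 h1
  | unfoldFold hv =>
      intro Γ T h
      cases h with | unfold h1 => cases h1; assumption
  | fixV hv =>
      intro Γ T h
      cases h with | fix h1 => exact .app h1 (.fix h1)
  | letrecV hv =>
      intro Γ T h
      cases h with | letrec h1 h2 => exact open0_preserves h2 (.fix (.lam h1))
  | tryV hv => intro Γ T h; cases h; assumption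
  | tryRaise hv =>
      intro Γ T h
      cases h with | tryw h1 h2 =>
        cases h1 with | raise h1 => exact .app h2 h1
  | ctx E hstep ih =>
      intro Γ T h
      obtain ⟨Δ, S, hS, hr⟩ := plug_inv E _ _ h
      exact hr _ (ih Δ S hS)
  | errCtx F hF hv =>
      intro Γ T h
      obtain ⟨Δ, S, hS, hr⟩ := plug_inv F _ _ h
      cases hS with | raise h1 => exact .raise (value_int_any hv h1)

/-- **Type preservation theorem for Fpl.**  If `∅ ⊢ e : T` and `e → e'` then
`∅ ⊢ e' : T`. -/
theorem fpl_preservation (e e' : Exp) (T : Ty)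
    (h : HasType [] e T) (hs : Step e e') : HasType [] e' T := by
  exact preservation_gen hs [] T h

end Fpl
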